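/- In a balanced strictly binary tree with u leaves, if r nodes with pairwise-disjoint leaf sets exactly cover a contiguous range of leaves, then the total number of distinct ancestors of these r nodes is O(r + log u). Specifically it is at most 2r + 2·⌈log₂ u⌉ + O(1). -/

import Mathlib

/-- A strictly binary tree with natural-number-labeled leaves (a wavelet tree shape). -/
inductive BTree where
  | leaf : ℕ → BTree
  | node : BTree → BTree → BTree

namespace BTree

/-- The leaves of the tree, in left-to-right order. -/
def leaves : BTree → List ℕ
  | leaf a => [a]
  | node l r => l.leaves ++ r.leaves

/-- Number of leaves. -/
def numLeaves (t : BTree) : ℕ := t.leaves.length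

/-- Balanced: at every node, the numbers of leaves of the two subtrees differ by at most 1. -/
def balanced : BTree → Prop
  | leaf _ => True
  | node l r => ((l.numLeaves : ℤ) - (r.numLeaves : ℤ) ≤ 1) ∧
      ((r.numLeaves : ℤ) - (l.numLeaves : ℤ) ≤ 1) ∧ l.balanced ∧ r.balanced

/-- A (root-to-node) path, given as a list of booleans (`false` = go left). -/
def validPath : BTree → List Bool → Prop
  | _, [] => True
  | leaf _, _ :: _ => False
  | node l r, b :: p => if b then r.validPath p else l.validPath p

/-- The subtree reached by following a path. -/
def subtreeAt : BTree → List Bool → Option BTree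
  | t, [] => some t
  | leaf _, _ :: _ => none
  | node l r, b :: p => if b then r.subtreeAt p else l.subtreeAt p

/-- The index (0-based, in left-to-right leaf order) of the first leaf below the node at a path. -/
def pathOffset : BTree → List Bool → ℕ
  | _, [] => 0
  | leaf _, _ :: _ => 0
  | node l r, b :: p => if b then l.numLeaves + r.pathOffset p else l.pathOffset p

/-- Number of leaves below the node at a path (0 if the path is invalid). -/
def pathLeaves (t : BTree) (p : List Bool) : ℕ := ((t.subtreeAt p).map numLeaves).getD 0

/-- The set of (positions of) leaves descending from the node at a path. -/
def leafInterval (t : BTree) (p : List Bool) : Finset ℕ :=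
  Finset.Ico (t.pathOffset p) (t.pathOffset p + t.pathLeaves p)

end BTree

namespace BTree

lemma one_le_numLeaves (t : BTree) : 1 ≤ t.numLeaves := by
  induction t with
  | leaf a => simp [numLeaves, leaves]
  | node l r ihl ihr =>
    simp only [numLeaves, leaves, List.length_append] at *; omega

lemma numLeaves_node (l r : BTree) : (node l r).numLeaves = l.numLeaves + r.numLeaves := by
  simp [numLeaves, leaves]

@[simp] lemma validPath_nil (t : BTree) : t.validPath [] := by cases t <;> exact trivial
@[simp] lemma validPath_leaf (a : ℕ) (b : Bool) (p : List Bool) :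
    ¬ (leaf a).validPath (b :: p) := fun h => h
@[simp] lemma validPath_cons_false (l r : BTree) (p : List Bool) :
    (node l r).validPath (false :: p) ↔ l.validPath p := by simp [validPath]
@[simp] lemma validPath_cons_true (l r : BTree) (p : List Bool) :
    (node l r).validPath (true :: p) ↔ r.validPath p := by simp [validPath]

@[simp] lemma pathLeaves_nil (t : BTree) : t.pathLeaves [] = t.numLeaves := by
  cases t <;> rfl
@[simp] lemma pathLeaves_cons_false (l r : BTree) (p : List Bool) :
    (node l r).pathLeaves (false :: p) = l.pathLeaves p := by simp [pathLeaves, subtreeAt]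
@[simp] lemma pathLeaves_cons_true (l r : BTree) (p : List Bool) :
    (node l r).pathLeaves (true :: p) = r.pathLeaves p := by simp [pathLeaves, subtreeAt]

@[simp] lemma pathOffset_nil (t : BTree) : t.pathOffset [] = 0 := by cases t <;> rfl
@[simp] lemma pathOffset_cons_false (l r : BTree) (p : List Bool) :
    (node l r).pathOffset (false :: p) = l.pathOffset p := by simp [pathOffset]
@[simp] lemma pathOffset_cons_true (l r : BTree) (p : List Bool) :
    (node l r).pathOffset (true :: p) = l.numLeaves + r.pathOffset p := by simp [pathOffset]

lemma validPath_prefix {t : BTree} {p q : List Bool} (h : t.validPath p) (hpre : q <+: p) :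
    t.validPath q := by
  induction q generalizing t p with
  | nil => simp
  | cons b q ih =>
    obtain ⟨s, rfl⟩ := hpre
    cases t with
    | leaf a => exact h
    | node l r =>
      cases b <;> simp only [List.cons_append, validPath_cons_false, validPath_cons_true] at h ⊢ <;>
        exact ih h ⟨s, rfl⟩

lemma pathLeaves_pos {t : BTree} {p : List Bool} (h : t.validPath p) : 0 < t.pathLeaves p := by
  induction p generalizing t with
  | nil => rw [pathLeaves_nil]; exact one_le_numLeaves t
  | cons b p ih =>
    cases t with
    | leaf a => simp at h
    | node l r => cases b <;> simp at h ⊢ <;> exact ih h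

lemma offset_add_leaves_le {t : BTree} {p : List Bool} (h : t.validPath p) :
    t.pathOffset p + t.pathLeaves p ≤ t.numLeaves := by
  induction p generalizing t with
  | nil => simp
  | cons b p ih =>
    cases t with
    | leaf a => simp at h
    | node l r =>
      rw [numLeaves_node]
      cases b <;> simp at h ⊢ <;> have := ih h <;> omega

lemma offset_le_append {t : BTree} (q s : List Bool) (h : t.validPath (q ++ s)) :
    t.pathOffset q ≤ t.pathOffset (q ++ s) := by
  induction q generalizing t with
  | nil => simp
  | cons b q ih =>
    cases t with
    | leaf a => simp at h
    | node l r =>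
      rw [List.cons_append] at h ⊢
      cases b <;> simp at h ⊢ <;> have := ih h <;> omega

lemma end_le_append {t : BTree} (q s : List Bool) (h : t.validPath (q ++ s)) :
    t.pathOffset (q ++ s) + t.pathLeaves (q ++ s) ≤ t.pathOffset q + t.pathLeaves q := by
  induction q generalizing t with
  | nil => simpa using offset_add_leaves_le h
  | cons b q ih =>
    cases t with
    | leaf a => simp at h
    | node l r =>
      rw [List.cons_append] at h ⊢
      cases b <;> simp at h ⊢ <;> have := ih h <;> omega

lemma interval_subset {t : BTree} {q p : List Bool} (h : t.validPath p) (hpre : q <+: p) :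
    t.leafInterval p ⊆ t.leafInterval q := by
  obtain ⟨s, rfl⟩ := hpre
  exact Finset.Ico_subset_Ico (offset_le_append q s h) (end_le_append q s h)

lemma comparable_of_mem {t : BTree} {p q : List Bool} {x : ℕ} (hp : t.validPath p)
    (hq : t.validPath q) (hxp : x ∈ t.leafInterval p) (hxq : x ∈ t.leafInterval q) :
    p <+: q ∨ q <+: p := by
  induction p generalizing t q x with
  | nil => exact Or.inl (List.nil_prefix)
  | cons b p ih =>
    cases q with
    | nil => exact Or.inr (List.nil_prefix)
    | cons c q =>
      cases t with
      | leaf a => simp at hp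
      | node l r =>
        simp only [leafInterval, Finset.mem_Ico] at hxp hxq
        cases b <;> cases c <;> simp at hp hq hxp hxq
        · rcases ih hp hq (t := l) (x := x) (by simp [leafInterval]; omega)
            (by simp [leafInterval]; omega) with h | h
          · exact Or.inl (List.cons_prefix_cons.mpr ⟨rfl, h⟩)
          · exact Or.inr (List.cons_prefix_cons.mpr ⟨rfl, h⟩)
        · exfalso; have := offset_add_leaves_le hp; omega
        · exfalso; have := offset_add_leaves_le hq; omega
        · rcases ih hp hq (t := r) (x := x - l.numLeaves) (by simp [leafInterval]; omega)
            (by simp [leafInterval]; omega) with h | h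
          · exact Or.inl (List.cons_prefix_cons.mpr ⟨rfl, h⟩)
          · exact Or.inr (List.cons_prefix_cons.mpr ⟨rfl, h⟩)

lemma length_le_clog {t : BTree} (hb : t.balanced) {p : List Bool} (h : t.validPath p) :
    p.length ≤ Nat.clog 2 t.numLeaves := by
  induction p generalizing t with
  | nil => simp
  | cons b p ih =>
    cases t with
    | leaf a => simp at h
    | node l r =>
      obtain ⟨h1, h2, hbl, hbr⟩ := hb
      have hl := one_le_numLeaves l
      have hr := one_le_numLeaves r
      have hn2 : 2 ≤ (node l r).numLeaves := by rw [numLeaves_node]; omega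
      have key : Nat.clog 2 ((node l r).numLeaves) =
          Nat.clog 2 (((node l r).numLeaves + 1) / 2) + 1 := by
        rw [Nat.clog_of_two_le (by norm_num) hn2]; congr 2
      have hchild : ∀ s : BTree, s.balanced → s.numLeaves ≤ ((node l r).numLeaves + 1) / 2 →
          s.validPath p → p.length + 1 ≤ Nat.clog 2 (node l r).numLeaves := by
        intro s hbs hle hv
        have h3 := ih hbs hv
        have h4 := Nat.clog_mono_right 2 hle
        omega
      cases b <;> simp only [validPath_cons_false, validPath_cons_true] at h <;>
        rw [List.length_cons]
      · exact hchild l hbl (by rw [numLeaves_node]; omega) h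
      · exact hchild r hbr (by rw [numLeaves_node]; omega) h

lemma validPath_sibling {t : BTree} {p : List Bool} {b b' : Bool}
    (h : t.validPath (p ++ [b])) : t.validPath (p ++ [b'])  := by
  induction p generalizing t with
  | nil =>
    cases t with
    | leaf a => simp at h
    | node l r => cases b' <;> simp
  | cons c p ih =>
    cases t with
    | leaf a => simp at h
    | node l r =>
      rw [List.cons_append] at h ⊢
      cases c <;> simp at h ⊢ <;> exact ih h

end BTree

open BTree in
/-- In a balanced strictly binary tree with `u` leaves, if `r` nodes with pairwise-disjoint
leaf sets exactly cover a contiguous range of leaves, then the total number of distinct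
ancestors of these `r` nodes (ancestors including the nodes themselves) is at most
`2r + 2⌈log₂ u⌉ + O(1)`. -/
theorem ancestors_of_covering_nodes :
    ∃ C : ℕ,
      ∀ (t : BTree) (P : Finset (List Bool)) (a ℓ : ℕ),
        t.balanced → (∀ p ∈ P, t.validPath p) →
        ((P : Set (List Bool)).Pairwise fun p q =>
          Disjoint (t.leafInterval p) (t.leafInterval q)) →
        P.biUnion (t.leafInterval) = Finset.Ico a (a + ℓ) →
        (P.biUnion fun p => p.inits.toFinset).card ≤
          2 * P.card + 2 * Nat.clog 2 t.numLeaves + C := by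
  classical
  use 1
  intro t P a ℓ hbal hvalid hdis hcov
  set A := P.biUnion (fun p => p.inits.toFinset) with hA
  have memA : ∀ q : List Bool, q ∈ A ↔ ∃ p ∈ P, q <+: p := by
    intro q; simp [hA, List.mem_inits]
  rcases P.eq_empty_or_nonempty with rfl | ⟨p0, hp0⟩
  · simp [hA]
  have validA : ∀ q ∈ A, t.validPath q := by
    intro q hq; obtain ⟨p, hp, hpre⟩ := (memA q).1 hq
    exact validPath_prefix (hvalid p hp) hpre
  have closedA : ∀ q ∈ A, ∀ q', q' <+: q → q' ∈ A := by
    intro q hq q' hpre; obtain ⟨p, hp, h2⟩ := (memA q).1 hq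
    exact (memA q').2 ⟨p, hp, hpre.trans h2⟩
  have hPint : ∀ p ∈ P, t.leafInterval p ⊆ Finset.Ico a (a + ℓ) := by
    intro p hp; rw [← hcov]; exact Finset.subset_biUnion_of_mem _ hp
  have hoffmem : ∀ q : List Bool, t.validPath q → t.pathOffset q ∈ t.leafInterval q := by
    intro q hq
    have := pathLeaves_pos hq
    simp only [leafInterval, Finset.mem_Ico]; omega
  -- every element of A has a witness leaf position inside the covered range
  have hwit : ∀ v ∈ A, ∃ x, x ∈ t.leafInterval v ∧ a ≤ x ∧ x < a + ℓ := by
    intro v hv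
    obtain ⟨p, hp, hpre⟩ := (memA v).1 hv
    have hx := hoffmem p (hvalid p hp)
    refine ⟨t.pathOffset p, interval_subset (hvalid p hp) hpre hx, ?_⟩
    have := hPint p hp hx; simpa [Finset.mem_Ico] using this
  -- distinct P members cannot have nested intervals
  have hPdis : ∀ p ∈ P, ∀ q ∈ P, q ≠ p → t.leafInterval q ⊆ t.leafInterval p → False := by
    intro p hp q hq hne hsub
    have hx := hoffmem q (hvalid q hq)
    exact Finset.disjoint_left.1 (hdis hq hp hne) hx (hsub hx)
  -- maximal elements lie in P
  have hmax : ∀ v ∈ A, v ++ [false] ∉ A → v ++ [true] ∉ A → v ∈ P := by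
    intro v hv hF hT
    obtain ⟨p, hp, hpre⟩ := (memA v).1 hv
    rcases eq_or_ne v p with rfl | hne
    · exact hp
    · obtain ⟨s, rfl⟩ := hpre
      cases s with
      | nil => simp at hne
      | cons b s =>
        have hmem : v ++ [b] ∈ A := (memA _).2 ⟨v ++ b :: s, hp, ⟨s, by simp⟩⟩
        cases b
        · exact absurd hmem hF
        · exact absurd hmem hT
  -- unary nodes straddle a boundary of the covered range
  have hunary : ∀ v : List Bool, ∀ b : Bool, v ++ [b] ∈ A → v ++ [!b] ∉ A →
      t.pathOffset v < a ∨ a + ℓ < t.pathOffset v + t.pathLeaves v := by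
    intro v b hb hnb
    by_contra hcon
    push_neg at hcon
    obtain ⟨ha1, ha2⟩ := hcon
    have hvA : v ∈ A := closedA _ hb v ⟨[b], rfl⟩
    have hvb : t.validPath (v ++ [b]) := validA _ hb
    have hvnb : t.validPath (v ++ [!b]) := validPath_sibling hvb
    have hxc := hoffmem (v ++ [!b]) hvnb
    have hxv : t.pathOffset (v ++ [!b]) ∈ t.leafInterval v :=
      interval_subset hvnb ⟨[!b], rfl⟩ hxc
    have hxrange : t.pathOffset (v ++ [!b]) ∈ Finset.Ico a (a + ℓ) := by
      have := Finset.Ico_subset_Ico ha1 ha2 (show _ ∈ t.leafInterval v from hxv)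
      exact this
    rw [← hcov, Finset.mem_biUnion] at hxrange
    obtain ⟨p, hp, hxp⟩ := hxrange
    rcases comparable_of_mem hvnb (hvalid p hp) hxc hxp with hcp | hpc
    · exact hnb ((memA _).2 ⟨p, hp, hcp⟩)
    · rcases eq_or_ne p (v ++ [!b]) with heq | hne
      · rw [heq] at hp; exact hnb ((memA _).2 ⟨_, hp, List.prefix_refl _⟩)
      · have hpv : p <+: v := by
          rcases List.prefix_concat_iff.1 hpc with h | h
          · exact absurd h hne
          · exact h
        have hsubvp : t.leafInterval v ⊆ t.leafInterval p :=
          interval_subset (validA _ hvA) hpv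
        obtain ⟨q, hq, hqv⟩ := (memA v).1 hvA
        rcases eq_or_ne q p with rfl | hqp
        · -- then v = q = p ∈ P; use the child v ++ [b] ∈ A
          have hvq : v = q := hqv.eq_of_length
            (Nat.le_antisymm hqv.length_le hpv.length_le)
          subst hvq
          obtain ⟨q0, hq0, hpre0⟩ := (memA _).1 hb
          have hq0ne : q0 ≠ v := by
            intro h; subst h
            have := hpre0.length_le; simp at this
          exact hPdis v hq q0 hq0 hq0ne
            ((interval_subset (hvalid q0 hq0) hpre0).trans
              (interval_subset hvb ⟨[b], rfl⟩))
        · exact hPdis p hp q hq hqp ((interval_subset (hvalid q hq) hqv).trans hsubvp)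
  -- handshake: every nonempty element of A is a child of a unique element of A
  have hnil : ([] : List Bool) ∈ A := (memA _).2 ⟨p0, hp0, List.nil_prefix⟩
  have hchildcard : ∀ b : Bool,
      (A.filter fun w => w.getLast? = some b).card =
      (A.filter fun v => v ++ [b] ∈ A).card := by
    intro b
    apply Finset.card_bij' (fun w _ => w.dropLast) (fun v _ => v ++ [b])
    · intro w hw
      simp only [Finset.mem_filter] at hw ⊢
      obtain ⟨hwA, hlast⟩ := hw
      rcases List.eq_nil_or_concat w with rfl | ⟨l', c, rfl⟩
      · simp at hlast
      · simp only [List.concat_eq_append] at hwA hlast ⊢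
        rw [List.getLast?_concat] at hlast
        have hcb : c = b := by simpa using hlast
        rw [hcb] at hwA
        rw [List.dropLast_concat]
        exact ⟨closedA _ hwA _ ⟨[b], rfl⟩, hwA⟩
    · intro v hv
      simp only [Finset.mem_filter] at hv ⊢
      exact ⟨hv.2, List.getLast?_concat⟩
    · intro w hw
      simp only [Finset.mem_filter] at hw
      obtain ⟨hwA, hlast⟩ := hw
      rcases List.eq_nil_or_concat w with rfl | ⟨l', c, rfl⟩
      · simp at hlast
      · simp only [List.concat_eq_append] at hlast ⊢
        rw [List.getLast?_concat] at hlast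
        have hcb : c = b := by simpa using hlast
        rw [List.dropLast_concat, hcb]
    · intro v hv
      simp
  have herase : (A.erase []).card =
      (A.filter fun v => v ++ [false] ∈ A).card +
      (A.filter fun v => v ++ [true] ∈ A).card := by
    rw [← hchildcard false, ← hchildcard true, ← Finset.card_union_of_disjoint]
    · congr 1
      ext w
      simp only [Finset.mem_union, Finset.mem_filter, Finset.mem_erase]
      constructor
      · rintro ⟨hne, hwA⟩
        rcases List.eq_nil_or_concat w with rfl | ⟨l', c, rfl⟩
        · exact absurd rfl hne
        · simp only [List.concat_eq_append] at hwA ⊢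
          cases c
          · exact Or.inl ⟨hwA, List.getLast?_concat⟩
          · exact Or.inr ⟨hwA, List.getLast?_concat⟩
      · rintro (⟨hwA, hl⟩ | ⟨hwA, hl⟩) <;>
          refine ⟨?_, hwA⟩ <;> rintro rfl <;> simp at hl
    · rw [Finset.disjoint_left]
      intro w hw1 hw2
      simp only [Finset.mem_filter] at hw1 hw2
      rw [hw1.2] at hw2; simp at hw2
  -- split counts
  have hsF := Finset.card_filter_add_card_filter_not
    (s := A) (p := fun v => v ++ [false] ∈ A)
  have hsplit1 := Finset.card_filter_add_card_filter_not
    (s := A.filter fun v => v ++ [false] ∈ A) (p := fun v => v ++ [true] ∈ A)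
  have hsplit2 := Finset.card_filter_add_card_filter_not
    (s := A.filter fun v => ¬ v ++ [false] ∈ A) (p := fun v => v ++ [true] ∈ A)
  have hsplit3 := Finset.card_filter_add_card_filter_not
    (s := A.filter fun v => v ++ [true] ∈ A) (p := fun v => v ++ [false] ∈ A)
  rw [Finset.filter_filter, Finset.filter_filter] at hsplit1 hsplit2 hsplit3
  have ecomm1 : (A.filter fun v => v ++ [true] ∈ A ∧ v ++ [false] ∈ A) =
      (A.filter fun v => v ++ [false] ∈ A ∧ v ++ [true] ∈ A) := by
    apply Finset.filter_congr; intro v _; rw [and_comm]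
  have ecomm2 : (A.filter fun v => v ++ [true] ∈ A ∧ ¬ v ++ [false] ∈ A) =
      (A.filter fun v => ¬ v ++ [false] ∈ A ∧ v ++ [true] ∈ A) := by
    apply Finset.filter_congr; intro v _; rw [and_comm]
  rw [ecomm1, ecomm2] at hsplit3
  -- maximal count
  have hn0 : (A.filter fun v => ¬ v ++ [false] ∈ A ∧ ¬ v ++ [true] ∈ A).card ≤ P.card := by
    apply Finset.card_le_card
    intro v hv
    simp only [Finset.mem_filter] at hv
    exact hmax v hv.1 hv.2.1 hv.2.2
  -- unary count
  have hU : (A.filter fun v => v ++ [false] ∈ A ∧ ¬ v ++ [true] ∈ A).card +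
      (A.filter fun v => ¬ v ++ [false] ∈ A ∧ v ++ [true] ∈ A).card ≤
      2 * Nat.clog 2 t.numLeaves := by
    rw [← Finset.card_union_of_disjoint]
    · set U := (A.filter fun v => v ++ [false] ∈ A ∧ ¬ v ++ [true] ∈ A) ∪
        (A.filter fun v => ¬ v ++ [false] ∈ A ∧ v ++ [true] ∈ A) with hUdef
      have hUprop : ∀ v ∈ U, v ∈ A ∧ (∃ b : Bool, v ++ [b] ∈ A ∧ v ++ [!b] ∉ A) := by
        intro v hv
        simp only [hUdef, Finset.mem_union, Finset.mem_filter] at hv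
        rcases hv with ⟨hvA, h1, h2⟩ | ⟨hvA, h1, h2⟩
        · exact ⟨hvA, false, h1, by simpa using h2⟩
        · exact ⟨hvA, true, h2, by simpa using h1⟩
      have hmaps : ∀ v ∈ U, (v.length, decide (t.pathOffset v < a)) ∈
          Finset.range (Nat.clog 2 t.numLeaves) ×ˢ (Finset.univ : Finset Bool) := by
        intro v hv
        obtain ⟨hvA, b, hb, -⟩ := hUprop v hv
        have hlen := length_le_clog hbal (validA _ hb)
        simp only [List.length_append, List.length_cons, List.length_nil] at hlen
        simp only [Finset.mem_product, Finset.mem_range, Finset.mem_univ, and_true]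
        omega
      have hinj : Set.InjOn (fun v => (v.length, decide (t.pathOffset v < a))) U := by
        intro v hv w hw heq
        simp only [Prod.mk.injEq] at heq
        obtain ⟨hlen, hbools⟩ := heq
        obtain ⟨hvA, bv, hbv, hnbv⟩ := hUprop v hv
        obtain ⟨hwA, bw, hbw, hnbw⟩ := hUprop w hw
        have hv2 := hunary v bv hbv hnbv
        have hw2 := hunary w bw hbw hnbw
        obtain ⟨xv, hxv, hxv1, hxv2⟩ := hwit v hvA
        obtain ⟨xw, hxw, hxw1, hxw2⟩ := hwit w hwA
        simp only [leafInterval, Finset.mem_Ico] at hxv hxw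
        have key : ∃ x, x ∈ t.leafInterval v ∧ x ∈ t.leafInterval w := by
          by_cases hc : t.pathOffset v < a
          · have hcw : t.pathOffset w < a := by
              by_contra hcw
              rw [show (decide (t.pathOffset v < a)) = true by simpa using hc] at hbools
              simp at hbools; omega
            refine ⟨a - 1, ?_, ?_⟩ <;> simp only [leafInterval, Finset.mem_Ico] <;> omega
          · have hcw : ¬ t.pathOffset w < a := by
              by_contra hcw
              rw [show (decide (t.pathOffset v < a)) = false by simpa using hc] at hbools
              simp at hbools; omega
            have h1 : a + ℓ < t.pathOffset v + t.pathLeaves v := by omega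
            have h2 : a + ℓ < t.pathOffset w + t.pathLeaves w := by omega
            refine ⟨a + ℓ, ?_, ?_⟩ <;> simp only [leafInterval, Finset.mem_Ico] <;> omega
        obtain ⟨x, hx1, hx2⟩ := key
        rcases comparable_of_mem (validA _ hvA) (validA _ hwA) hx1 hx2 with h | h
        · exact h.eq_of_length hlen
        · exact (h.eq_of_length hlen.symm).symm
      calc U.card ≤ ((Finset.range (Nat.clog 2 t.numLeaves)) ×ˢ
            (Finset.univ : Finset Bool)).card :=
          Finset.card_le_card_of_injOn _ hmaps hinj
        _ = 2 * Nat.clog 2 t.numLeaves := by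
          simp [Finset.card_product, mul_comm]
    · rw [Finset.disjoint_left]
      rintro v hv1 hv2
      simp only [Finset.mem_filter] at hv1 hv2
      exact hv2.2.1 hv1.2.1
  have hcerase : (A.erase []).card = A.card - 1 := Finset.card_erase_of_mem hnil
  have hApos : 1 ≤ A.card := Finset.card_pos.2 ⟨[], hnil⟩
  omega
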